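/- Let 0 < λ < 1, r > 1, 0 < λ' < 1, r' > 1 and w₀, w₀' > 0. Suppose (m_j), (n_j) are sequences of natural numbers with n_j → ∞, λ^{m_j} r^{n_j} → w₀ and λ'^{m_j} r'^{n_j} → w₀'. Then (log λ)/(log r) = (log λ')/(log r'). -/

import Mathlib

open Filter Real

lemma ratio_tendsto (lam r w₀ : ℝ)
    (hlam0 : 0 < lam) (hlam1 : lam < 1) (hr : 1 < r) (hw : 0 < w₀) (m n : ℕ → ℕ)
    (hn : Tendsto (fun j => (n j : ℝ)) atTop atTop)
    (hconv : Tendsto (fun j => lam ^ (m j) * r ^ (n j)) atTop (nhds w₀)) :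
    Tendsto (fun j => (m j : ℝ) / (n j : ℝ)) atTop
      (nhds (-Real.log r / Real.log lam)) := by
  have hr0 : (0:ℝ) < r := lt_trans one_pos hr
  have hlog : Tendsto (fun j => Real.log (lam ^ (m j) * r ^ (n j))) atTop
      (nhds (Real.log w₀)) :=
    ((Real.continuousAt_log hw.ne').tendsto).comp hconv
  have heq : (fun j => Real.log (lam ^ (m j) * r ^ (n j)))
      = fun j => (m j : ℝ) * Real.log lam + (n j : ℝ) * Real.log r := by
    funext j
    rw [Real.log_mul (pow_pos hlam0 _).ne' (pow_pos hr0 _).ne',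
      Real.log_pow, Real.log_pow]
  rw [heq] at hlog
  have hdiv : Tendsto (fun j => ((m j : ℝ) * Real.log lam + (n j : ℝ) * Real.log r)
      / (n j : ℝ)) atTop (nhds 0) := hlog.div_atTop hn
  have hev : ∀ᶠ j in atTop, ((m j : ℝ) * Real.log lam + (n j : ℝ) * Real.log r)
      / (n j : ℝ) = (m j : ℝ) / (n j : ℝ) * Real.log lam + Real.log r := by
    filter_upwards [hn.eventually_gt_atTop 0] with j hj
    field_simp
  have h2 : Tendsto (fun j => (m j : ℝ) / (n j : ℝ) * Real.log lam + Real.log r)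
      atTop (nhds 0) := hdiv.congr' hev
  have h3 : Tendsto (fun j => (m j : ℝ) / (n j : ℝ) * Real.log lam)
      atTop (nhds (-Real.log r)) := by
    have := h2.sub_const (Real.log r)
    simpa using this
  have hll : Real.log lam ≠ 0 := (Real.log_neg hlam0 hlam1).ne
  have h4 := h3.div_const (Real.log lam)
  have : (fun j => (m j : ℝ) / (n j : ℝ) * Real.log lam / Real.log lam)
      = fun j => (m j : ℝ) / (n j : ℝ) := by
    funext j; rw [mul_div_assoc, div_self hll, mul_one]
  rwa [this] at h4

theorem stmt_1 (lam r lam' r' w₀ w₀' : ℝ)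
    (hlam0 : 0 < lam) (hlam1 : lam < 1) (hr : 1 < r)
    (hlam0' : 0 < lam') (hlam1' : lam' < 1) (hr' : 1 < r')
    (hw : 0 < w₀) (hw' : 0 < w₀') (m n : ℕ → ℕ)
    (hn : Tendsto (fun j => (n j : ℝ)) atTop atTop)
    (hconv : Tendsto (fun j => lam ^ (m j) * r ^ (n j)) atTop (nhds w₀))
    (hconv' : Tendsto (fun j => lam' ^ (m j) * r' ^ (n j)) atTop (nhds w₀')) :
    Real.log lam / Real.log r = Real.log lam' / Real.log r' := by
  have h1 := ratio_tendsto lam r w₀ hlam0 hlam1 hr hw m n hn hconv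
  have h2 := ratio_tendsto lam' r' w₀' hlam0' hlam1' hr' hw' m n hn hconv'
  have heq : -Real.log r / Real.log lam = -Real.log r' / Real.log lam' :=
    tendsto_nhds_unique h1 h2
  have hll : Real.log lam < 0 := Real.log_neg hlam0 hlam1
  have hll' : Real.log lam' < 0 := Real.log_neg hlam0' hlam1'
  have hlr : 0 < Real.log r := Real.log_pos hr
  have hlr' : 0 < Real.log r' := Real.log_pos hr'
  have a1 : Real.log lam ≠ 0 := hll.ne
  have a2 : Real.log lam' ≠ 0 := hll'.ne
  field_simp at heq ⊢
  linear_combination heq
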